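/- Assume t > 0 and t < n. In any protocol Q solving uniform consensus in the crash-failure model, no process decides at time 0 in any run of Q. -/
import Mathlib


attribute [local instance] Classical.propDecidable

/-- An adversary in the synchronous crash-failure model: an input vector of binary
initial values, a failure pattern given by the delivery relation `F` (`F m j i` means
the message sent by `j` at time `m` is delivered to `i` at time `m+1`, i.e. in round `m+1`),
and a crash round for each process (`⊤` meaning the process never crashes).
A process behaves correctly before its crashing round and sends nothing afterwards;
during its crashing round it may send to an arbitrary subset. -/
structure Adversary (n : ℕ) where
  init : Fin n → Bool
  F : ℕ → Fin n → Fin n → Prop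
  crash : Fin n → ℕ∞
  crash_pos : ∀ j, 1 ≤ crash j
  before_crash : ∀ (m : ℕ) (j i : Fin n), ((m + 1 : ℕ) : ℕ∞) < crash j → F m j i
  after_crash : ∀ (m : ℕ) (j i : Fin n), crash j < ((m + 1 : ℕ) : ℕ∞) → ¬ F m j i

namespace Adversary

variable {n : ℕ}

/-- A process is faulty if it crashes at some point. -/
def Faulty (A : Adversary n) (j : Fin n) : Prop := A.crash j ≠ ⊤

/-- The number `f` of actual failures in the run determined by the adversary. -/
noncomputable def numFaults (A : Adversary n) : ℕ := {j | A.Faulty j}.ncard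

/-- A process is active at time `m` if it has not crashed before time `m`. -/
def Active (A : Adversary n) (j : Fin n) (m : ℕ) : Prop := ((m : ℕ) : ℕ∞) < A.crash j

end Adversary

/-- `Seen A ⟨j,ℓ⟩ ⟨i,m⟩`: node `⟨j,ℓ⟩` is in the view (communication graph) of node
`⟨i,m⟩`, i.e. there is a message chain from `⟨j,ℓ⟩` to `⟨i,m⟩`. -/
inductive Seen {n : ℕ} (A : Adversary n) : Fin n × ℕ → Fin n × ℕ → Prop
  | refl (p : Fin n × ℕ) : Seen A p p
  | self {p : Fin n × ℕ} {i : Fin n} {m : ℕ} : Seen A p (i, m) → Seen A p (i, m + 1)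
  | step {p : Fin n × ℕ} {j i : Fin n} {m : ℕ} : Seen A p (j, m) → A.F m j i →
      Seen A p (i, m + 1)

open Adversary

/-- Two adversaries give process `i` the same view at time `m` in a full-information
protocol: the same nodes are seen, with the same initial values at seen time-0 nodes
and the same incoming edges at seen later nodes. -/
def sameView {n : ℕ} (A B : Adversary n) (i : Fin n) (m : ℕ) : Prop :=
  (∀ p, Seen A p (i, m) ↔ Seen B p (i, m)) ∧
  (∀ j, Seen A (j, 0) (i, m) → A.init j = B.init j) ∧
  (∀ (k : ℕ) (j j' : Fin n), Seen A (j', k + 1) (i, m) → (A.F k j j' ↔ B.F k j j'))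

/-- The local state of (active) process `i` at time `m` is the same under both
adversaries: `i` is active in both and has the same full-information view. -/
def sameLocal {n : ℕ} (A B : Adversary n) (i : Fin n) (m : ℕ) : Prop :=
  A.Active i m ∧ B.Active i m ∧ sameView A B i m

/-- The runs of the system are those generated by adversaries with at most `t` crashes. -/
def Valid {n : ℕ} (t : ℕ) (A : Adversary n) : Prop := A.numFaults ≤ t

/-- Knowledge in the full-information protocol: `i` knows the fact `φ` at time `m`
iff `φ` holds at time `m` in every run (with at most `t` failures) in which `i` has
the same local state. -/
def Knows {n : ℕ} (t : ℕ) (φ : Adversary n → ℕ → Prop) (A : Adversary n) (i : Fin n)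
    (m : ℕ) : Prop :=
  ∀ B : Adversary n, Valid t B → sameLocal A B i m → φ B m

/-- The fact `∃v`: some process has initial value `v`. -/
def existsVal {n : ℕ} (v : Bool) : Adversary n → ℕ → Prop := fun A _ => ∃ j, A.init j = v

/-- Node `⟨j',m'⟩` is revealed to `⟨i,m⟩`: either it is seen by `⟨i,m⟩`, or for some
seen node `⟨i',m'⟩` the edge `(⟨j',m'-1⟩,⟨i',m'⟩)` is absent from `i`'s view
(proving that `j'` crashed before time `m'`). -/
def RevealedNode {n : ℕ} (A : Adversary n) (j' : Fin n) (m' : ℕ) (i : Fin n) (m : ℕ) :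
    Prop :=
  Seen A (j', m') (i, m) ∨
  ∃ (i' : Fin n) (k : ℕ), m' = k + 1 ∧ Seen A (i', k + 1) (i, m) ∧ ¬ A.F k j' i'

/-- Time `k` is revealed to `⟨i,m⟩` if every node `⟨j',k⟩` is revealed to `⟨i,m⟩`. -/
def RevealedTime {n : ℕ} (A : Adversary n) (k : ℕ) (i : Fin n) (m : ℕ) : Prop :=
  ∀ j', RevealedNode A j' k i m

/-- A hidden path w.r.t. `⟨i,m⟩`: for each `k ≤ m` a node `⟨j_k,k⟩` not revealed to `⟨i,m⟩`. -/
def HiddenPath {n : ℕ} (A : Adversary n) (i : Fin n) (m : ℕ) : Prop :=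
  ∃ js : ℕ → Fin n, ∀ k ≤ m, ¬ RevealedNode A (js k) k i m

/-- `not-known(∃0)`: no process active at time `m` knows `∃0`. -/
def notKnown0 {n : ℕ} (t : ℕ) : Adversary n → ℕ → Prop :=
  fun A m => ∀ j, A.Active j m → ¬ Knows t (existsVal false) A j m

/-- A (full-information, deterministic) decision protocol, described by the decision
status function: `P A i m = some v` iff by time `m` process `i` has decided `v`
in the run determined by adversary `A`. -/
abbrev ProtoDec (n : ℕ) : Type := Adversary n → Fin n → ℕ → Option Bool

/-- Sanity conditions making a decision-status function a protocol: decisions are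
irrevocable, and (for active processes) depend only on the local state. -/
def IsProtocol {n : ℕ} (t : ℕ) (P : ProtoDec n) : Prop :=
  (∀ A i m v, P A i m = some v → P A i (m + 1) = some v) ∧
  (∀ A B i m, Valid t A → Valid t B → sameLocal A B i m → P A i m = P B i m)

/-- Process `i` performs the action `decide(v)` at time `m`: it is decided on `v`
at `m` and was undecided before. -/
def DecidesAt {n : ℕ} (P : ProtoDec n) (A : Adversary n) (i : Fin n) (m : ℕ) (v : Bool) :
    Prop :=
  P A i m = some v ∧ ∀ k < m, P A i k = none

/-- Decision: every correct process eventually decides. -/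
def Decision {n : ℕ} (t : ℕ) (P : ProtoDec n) : Prop :=
  ∀ A : Adversary n, Valid t A → ∀ i, ¬ A.Faulty i → ∃ m, P A i m ≠ none

/-- Validity: if all initial values are `v` then correct processes decide `v`. -/
def Validity {n : ℕ} (t : ℕ) (P : ProtoDec n) : Prop :=
  ∀ A : Adversary n, Valid t A → ∀ v : Bool, (∀ j, A.init j = v) →
    ∀ i m w, ¬ A.Faulty i → P A i m = some w → w = v

/-- Agreement: all correct processes decide on the same value. -/
def Agreement {n : ℕ} (t : ℕ) (P : ProtoDec n) : Prop :=
  ∀ A : Adversary n, Valid t A → ∀ i j m m' v w, ¬ A.Faulty i → ¬ A.Faulty j →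
    P A i m = some v → P A j m' = some w → v = w

def ConsensusSolves {n : ℕ} (t : ℕ) (P : ProtoDec n) : Prop :=
  Decision t P ∧ Validity t P ∧ Agreement t P

/-- Uniform Agreement: all processes that decide (faulty or not) decide the same value. -/
def UniformAgreement {n : ℕ} (t : ℕ) (P : ProtoDec n) : Prop :=
  ∀ A : Adversary n, Valid t A → ∀ i j m m' v w,
    P A i m = some v → P A j m' = some w → v = w

def UniformConsensusSolves {n : ℕ} (t : ℕ) (P : ProtoDec n) : Prop :=
  Decision t P ∧ Validity t P ∧ UniformAgreement t P

/-- `Q` dominates `P`: for every adversary and process, if `i` has decided by time `m`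
in `P` then `i` has decided by time `m` in `Q`. -/
def Dominates {n : ℕ} (t : ℕ) (Q P : ProtoDec n) : Prop :=
  ∀ A : Adversary n, Valid t A → ∀ i m, P A i m ≠ none → Q A i m ≠ none

def StrictlyDominates {n : ℕ} (t : ℕ) (Q P : ProtoDec n) : Prop :=
  Dominates t Q P ∧ ¬ Dominates t P Q

/-- Turn a per-time decision rule into a decision-status function (the first decision
taken is kept forever). -/
def runDec (step : ℕ → Option Bool) : ℕ → Option Bool
  | 0 => step 0
  | m + 1 => (runDec step m).elim (step (m + 1)) some

/-- The protocol `P₀`: decide 0 as soon as `K_i ∃0` holds, otherwise decide 1 at time `t+1`. -/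
noncomputable def P0 (n t : ℕ) : ProtoDec n := fun A i =>
  runDec fun m =>
    if Knows t (existsVal false) A i m then some false
    else if m = t + 1 then some true
    else none

/-- The unbeatable protocol `Opt₀`: decide 0 as soon as `K_i ∃0` holds, and decide 1
as soon as `K_i not-known(∃0)` holds. -/
noncomputable def Opt0 (n t : ℕ) : ProtoDec n := fun A i =>
  runDec fun m =>
    if Knows t (existsVal false) A i m then some false
    else if Knows t (notKnown0 t) A i m then some true
    else none

/-- The number of processes with initial value `false` (0). -/
noncomputable def zeros {n : ℕ} (A : Adversary n) : ℕ :=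
  (Finset.univ.filter fun j => A.init j = false).card

/-- The number of processes with initial value `true` (1). -/
noncomputable def ones {n : ℕ} (A : Adversary n) : ℕ :=
  (Finset.univ.filter fun j => A.init j = true).card

/-- The fact `Maj = 0`: at least `n/2` initial values are 0. -/
def Maj0 (n : ℕ) : Adversary n → ℕ → Prop := fun A _ => n ≤ 2 * zeros A

/-- The fact `Maj = 1`: strictly more than `n/2` initial values are 1. -/
def Maj1 (n : ℕ) : Adversary n → ℕ → Prop := fun A _ => n < 2 * ones A

noncomputable def seenZeros {n : ℕ} (A : Adversary n) (i : Fin n) (m : ℕ) : ℕ :=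
  (Finset.univ.filter fun j => Seen A (j, 0) (i, m) ∧ A.init j = false).card

noncomputable def seenOnes {n : ℕ} (A : Adversary n) (i : Fin n) (m : ℕ) : ℕ :=
  (Finset.univ.filter fun j => Seen A (j, 0) (i, m) ∧ A.init j = true).card

/-- `Maj(vals(i,m))`: 0 if at least half of the initial values known to `i` at `m`
are 0, and 1 otherwise. -/
noncomputable def MajSeen {n : ℕ} (A : Adversary n) (i : Fin n) (m : ℕ) : Bool :=
  if seenOnes A i m ≤ seenZeros A i m then false else true

/-- The unbeatable majority consensus protocol `Opt_Maj`. -/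
noncomputable def OptMaj (n t : ℕ) : ProtoDec n := fun A i =>
  runDec fun m =>
    if Knows t (Maj0 n) A i m then some false
    else if Knows t (Maj1 n) A i m then some true
    else if ∃ k ≤ m, RevealedTime A k i m then some (MajSeen A i m)
    else none

/-- The fact `∀1`: all initial values are 1. -/
def all1 (n : ℕ) : Adversary n → ℕ → Prop := fun A _ => ∀ j, A.init j = true

/-- The sender set of `i` repeats at `⟨i,m⟩`: `i` hears from the same set of processes
in rounds `m-1` and `m` (only meaningful for `m ≥ 2`). -/
def senderSetRepeats {n : ℕ} (A : Adversary n) (i : Fin n) (m : ℕ) : Prop :=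
  ∀ j, (A.F (m - 2) j i ↔ A.F (m - 1) j i)

/-- The protocol `P0_opt` of Halpern, Moses and Waarts. -/
noncomputable def P0opt (n t : ℕ) : ProtoDec n := fun A i =>
  runDec fun m =>
    if Knows t (existsVal false) A i m then some false
    else if Knows t (all1 n) A i m ∨ (2 ≤ m ∧ senderSetRepeats A i m) then some true
    else none

/-- The fact `∃correct(v)`: some correct (never-failing) process knows `∃v`. -/
def ExistsCorrectKnows {n : ℕ} (t : ℕ) (v : Bool) : Adversary n → ℕ → Prop :=
  fun A m => ∃ j, ¬ A.Faulty j ∧ Knows t (existsVal v) A j m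

/-- The number `d` of failures process `i` knows of at time `m`: the number of
processes `j ≠ i` from which `i` receives no message in round `m`. -/
noncomputable def knownFaults {n : ℕ} (A : Adversary n) (i : Fin n) : ℕ → ℕ
  | 0 => 0
  | m + 1 => (Finset.univ.filter fun j => j ≠ i ∧ ¬ A.F m j i).card

/-- The protocol `u-P₀` for uniform consensus: decide 0 as soon as
`K_i ∃correct(0)` holds, otherwise decide 1 at time `t+1`. -/
noncomputable def uP0 (n t : ℕ) : ProtoDec n := fun A i =>
  runDec fun m =>
    if Knows t (ExistsCorrectKnows t false) A i m then some false
    else if m = t + 1 then some true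
    else none

/-- The unbeatable uniform consensus protocol `u-Opt₀`. -/
noncomputable def uOpt0 (n t : ℕ) : ProtoDec n := fun A i =>
  runDec fun m =>
    if Knows t (ExistsCorrectKnows t false) A i m then some false
    else if ¬ Knows t (existsVal false) A i m ∧ ∃ k ≤ m, RevealedTime A k i m then
      some true
    else none

/-- All decisions in the run `P[A]` are taken at or before time `m`. -/
def AllDecidedBy {n : ℕ} (P : ProtoDec n) (A : Adversary n) (m : ℕ) : Prop :=
  ∀ i k, P A i k ≠ none → P A i m ≠ none

/-- `Q` last-decider dominates `P`. -/
def LDDominates {n : ℕ} (t : ℕ) (Q P : ProtoDec n) : Prop :=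
  ∀ A : Adversary n, Valid t A → ∀ m, AllDecidedBy P A m → AllDecidedBy Q A m

/-- A 0-chain for `⟨i,m⟩`: distinct processes `j₀,…,j_d = i` with `d ≤ m`, `j₀` having
initial value 0, and `j_k` receiving a message from `j_{k-1}` at time `k` (round `k`). -/
def ZeroChain {n : ℕ} (A : Adversary n) (i : Fin n) (m : ℕ) : Prop :=
  ∃ d ≤ m, ∃ js : ℕ → Fin n, js d = i ∧
    (∀ k ≤ d, ∀ l ≤ d, js k = js l → k = l) ∧
    A.init (js 0) = false ∧
    ∀ k, 1 ≤ k → k ≤ d → A.F (k - 1) (js (k - 1)) (js k)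

/-- Auxiliary adversary: process `i` crashes at round 1 sending nothing; everyone
else is correct and all messages among them are delivered. -/
def crashAdv (n : ℕ) (i : Fin n) (ini : Fin n → Bool) : Adversary n where
  init := ini
  F := fun m j _ => ((m + 1 : ℕ) : ℕ∞) < (if j = i then 1 else ⊤)
  crash := fun j => if j = i then 1 else ⊤
  crash_pos := by intro j; by_cases h : j = i <;> simp [h]
  before_crash := by intro m j i' h; exact h
  after_crash := by intro m j i' h h'; exact lt_asymm h h'

lemma crashAdv_not_F (n : ℕ) (i : Fin n) (ini : Fin n → Bool) (m : ℕ) (i' : Fin n) :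
    ¬ (crashAdv n i ini).F m i i' := by
  simp only [crashAdv, if_pos rfl]
  intro h
  exact absurd h (by simp [not_lt, show (1:ℕ∞) ≤ ((m+1:ℕ):ℕ∞) by exact_mod_cast Nat.succ_le_succ (Nat.zero_le m)])

lemma crashAdv_faulty_iff (n : ℕ) (i : Fin n) (ini : Fin n → Bool) (j : Fin n) :
    (crashAdv n i ini).Faulty j ↔ j = i := by
  simp only [Adversary.Faulty, crashAdv]
  split
  · simp_all
  · simp_all

lemma crashAdv_valid (n t : ℕ) (h0 : 0 < t) (i : Fin n) (ini : Fin n → Bool) :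
    Valid t (crashAdv n i ini) := by
  have : {j | (crashAdv n i ini).Faulty j} = {i} := by
    ext j; simp [crashAdv_faulty_iff]
  simp only [Valid, Adversary.numFaults, this, Set.ncard_singleton]
  exact h0

lemma seen_zero {n : ℕ} {A : Adversary n} {p : Fin n × ℕ} {i : Fin n}
    (h : Seen A p (i, 0)) : p = (i, 0) := by
  cases h; rfl

lemma seen_from_silent {n : ℕ} {A : Adversary n} {i : Fin n}
    (hs : ∀ m i', ¬ A.F m i i') {p q : Fin n × ℕ} (h : Seen A p q) (hp : p.1 = i) :
    q.1 = i := by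
  induction h with
  | refl => exact hp
  | self _ ih => exact ih
  | @step j' i' m' _ hF ih =>
      have hji : j' = i := ih
      subst hji
      exact absurd hF (hs _ _)

lemma seen_congr {n : ℕ} {A B : Adversary n} (hF : A.F = B.F) {p q : Fin n × ℕ}
    (h : Seen A p q) : Seen B p q := by
  induction h with
  | refl => exact Seen.refl _
  | self _ ih => exact Seen.self ih
  | step _ hEdge ih => exact Seen.step ih (hF ▸ hEdge)

lemma crashAdv_F_eq (n : ℕ) (i : Fin n) (ini ini' : Fin n → Bool) :
    (crashAdv n i ini).F = (crashAdv n i ini').F := rfl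

/-- A correct process `j ≠ i` has the same local state under two crash adversaries
that differ only in `i`'s initial value. -/
lemma crashAdv_sameLocal (n : ℕ) (i : Fin n) (ini ini' : Fin n → Bool)
    (hini : ∀ j, j ≠ i → ini j = ini' j) (j : Fin n) (hj : j ≠ i) (m : ℕ) :
    sameLocal (crashAdv n i ini) (crashAdv n i ini') j m := by
  refine ⟨?_, ?_, ?_, ?_, ?_⟩
  · simp [Adversary.Active, crashAdv, hj]
  · simp [Adversary.Active, crashAdv, hj]
  · intro p
    exact ⟨seen_congr (crashAdv_F_eq n i ini ini'),
      seen_congr (crashAdv_F_eq n i ini' ini)⟩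
  · intro j' hseen
    by_cases hj' : j' = i
    · have := seen_from_silent (crashAdv_not_F n i ini) hseen hj'
      exact absurd this hj
    · exact hini j' hj'
  · intro k j' j'' _
    rw [crashAdv_F_eq n i ini ini']

theorem seen_zero_iff {n : ℕ} (A : Adversary n) (i : Fin n) (p : Fin n × ℕ) :
    Seen A p (i, 0) ↔ p = (i, 0) :=
  ⟨seen_zero, fun h => h ▸ Seen.refl _⟩

/-- Process `i` itself has the same local state at time 0 under `A` and under the
crash adversary with matching initial value for `i`. -/
lemma sameLocal_zero {n : ℕ} (A : Adversary n) (i : Fin n) (ini : Fin n → Bool)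
    (h : ini i = A.init i) : sameLocal A (crashAdv n i ini) i 0 := by
  refine ⟨?_, ?_, ?_, ?_, ?_⟩
  · exact lt_of_lt_of_le (by norm_num) (A.crash_pos i)
  · simp [Adversary.Active, crashAdv]
  · intro p
    rw [seen_zero_iff, seen_zero_iff]
  · intro j hseen
    have := seen_zero hseen
    have hji : j = i := congrArg Prod.fst this
    subst hji
    exact h.symm
  · intro k j j' hseen
    have := seen_zero hseen
    exact absurd (congrArg Prod.snd this) (Nat.succ_ne_zero k)

/-- If `0 < t < n`, then in any protocol solving uniform consensus no process decides
at time 0 in any run. -/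
theorem uniform_no_decision_at_zero (n t : ℕ) (h0 : 0 < t) (ht : t < n)
    (Q : ProtoDec n) (hQ : IsProtocol t Q) (hU : UniformConsensusSolves t Q) :
    ∀ A : Adversary n, Valid t A → ∀ i : Fin n, Q A i 0 = none := by
  intro A hA i
  by_contra hne
  obtain ⟨v, hv⟩ : ∃ v, Q A i 0 = some v := by
    cases h : Q A i 0 with
    | none => exact absurd h hne
    | some v => exact ⟨v, rfl⟩
  -- run B: i has its own initial value, crashes silently; others have !v
  set iniB : Fin n → Bool := fun j => if j = i then A.init i else !v with hiniB
  set B := crashAdv n i iniB with hB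
  set B' := crashAdv n i (fun _ => !v) with hB'
  have hvalB : Valid t B := crashAdv_valid n t h0 i iniB
  have hvalB' : Valid t B' := crashAdv_valid n t h0 i (fun _ => !v)
  -- i decides v at time 0 in B as well
  have hQB : Q B i 0 = some v := by
    have := hQ.2 A B i 0 hA hvalB (sameLocal_zero A i iniB (by simp [hiniB]))
    rw [← this]; exact hv
  -- pick a correct process j ≠ i
  have hn2 : 1 < n := lt_of_le_of_lt h0 ht
  have : Nontrivial (Fin n) := Fin.nontrivial_iff_two_le.mpr hn2
  obtain ⟨j, hj⟩ := exists_ne i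
  have hjcorr' : ¬ B'.Faulty j := by
    rw [hB', crashAdv_faulty_iff]; exact hj
  -- j eventually decides in B', and by validity it decides !v
  obtain ⟨m, hm⟩ := hU.1 B' hvalB' j hjcorr'
  obtain ⟨w, hw⟩ : ∃ w, Q B' j m = some w := by
    cases h : Q B' j m with
    | none => exact absurd h hm
    | some w => exact ⟨w, rfl⟩
  have hwv : w = !v := hU.2.1 B' hvalB' (!v) (fun _ => rfl) j m w hjcorr' hw
  -- j's local state is the same in B and B', so it decides !v in B too
  have hsame : sameLocal B B' j m :=
    crashAdv_sameLocal n i iniB (fun _ => !v)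
      (fun j' hj' => by simp [hiniB, if_neg hj']) j hj m
  have hQBj : Q B j m = some (!v) := by
    have := hQ.2 B B' j m hvalB hvalB' hsame
    rw [this, hw, hwv]
  -- uniform agreement in B gives v = !v, contradiction
  have := hU.2.2 B hvalB i j 0 m v (!v) hQB hQBj
  simp at this
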